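/- Let ι : W_{D(2)} → W_D ⊗ W_D be the ℝ-algebra homomorphism determined by ι(u) = x ⊗ 1 and ι(v) = x ⊗ x (this is well defined since (x ⊗ 1)² = (x ⊗ 1)(x ⊗ x) = (x ⊗ x)² = 0 in W_D ⊗ W_D). Then ι is injective and its range is exactly the equalizer subalgebra {z ∈ W_D ⊗ W_D : p₁(z) = p₀(z)}; in other words, W_{D(2)} → W_D ⊗ W_D ⇉ W_D is an equalizer diagram of commutative ℝ-algebras. -/

import Mathlib

open TensorProduct Polynomial

noncomputable section

/-- The first projection `p₁ : A ⊗ B →ₐ[ℝ] B`, `a ⊗ b ↦ ε_A a • b`. -/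
def p1 {A B : Type} [CommRing A] [CommRing B] [Algebra ℝ A] [Algebra ℝ B]
    (εA : A →ₐ[ℝ] ℝ) : (A ⊗[ℝ] B) →ₐ[ℝ] B :=
  Algebra.TensorProduct.productMap ((Algebra.ofId ℝ B).comp εA) (AlgHom.id ℝ B)

/-- The second projection `p₀ : A ⊗ B →ₐ[ℝ] B`, `a ⊗ b ↦ (ε_A a * ε_B b) • 1`. -/
def p0 {A B : Type} [CommRing A] [CommRing B] [Algebra ℝ A] [Algebra ℝ B]
    (εA : A →ₐ[ℝ] ℝ) (εB : B →ₐ[ℝ] ℝ) : (A ⊗[ℝ] B) →ₐ[ℝ] B :=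
  Algebra.TensorProduct.productMap ((Algebra.ofId ℝ B).comp εA) ((Algebra.ofId ℝ B).comp εB)

/-- The Weil algebra `W_D = ℝ[X]/(X²)`. -/
def WD : Type := Polynomial ℝ ⧸ Ideal.span {(X : Polynomial ℝ) ^ 2}

instance : CommRing WD := Ideal.Quotient.commRing _
instance : Algebra ℝ WD := Ideal.Quotient.algebra _

/-- The class of `X` in `W_D`. -/
def xD : WD := Ideal.Quotient.mk _ (X : Polynomial ℝ)

/-- The augmentation `ε : W_D →ₐ[ℝ] ℝ`, `a + b·x ↦ a`. -/
def εD : WD →ₐ[ℝ] ℝ :=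
  Ideal.Quotient.liftₐ _ (aeval (0 : ℝ)) (by
    intro a ha
    rw [Ideal.mem_span_singleton] at ha
    obtain ⟨c, rfl⟩ := ha
    simp)

/-- The ideal `(U², UV, V²)` in `ℝ[U,V]`. -/
def ID2 : Ideal (MvPolynomial (Fin 2) ℝ) :=
  Ideal.span {MvPolynomial.X 0 * MvPolynomial.X 0, MvPolynomial.X 0 * MvPolynomial.X 1,
    MvPolynomial.X 1 * MvPolynomial.X 1}

/-- The Weil algebra `W_{D(2)} = ℝ[U,V]/(U², UV, V²)`. -/
def WD2 : Type := MvPolynomial (Fin 2) ℝ ⧸ ID2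

instance : CommRing WD2 := Ideal.Quotient.commRing _
instance : Algebra ℝ WD2 := Ideal.Quotient.algebra _

lemma xD_sq : xD * xD = 0 := by
  have h : (Ideal.Quotient.mk (Ideal.span {(X : Polynomial ℝ) ^ 2}))
      ((X : Polynomial ℝ) ^ 2) = 0 :=
    Ideal.Quotient.eq_zero_iff_mem.2 (Ideal.subset_span rfl)
  have h2 : (Ideal.Quotient.mk (Ideal.span {(X : Polynomial ℝ) ^ 2})) (X : Polynomial ℝ) *
      (Ideal.Quotient.mk (Ideal.span {(X : Polynomial ℝ) ^ 2})) (X : Polynomial ℝ) = 0 := by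
    simpa [pow_two, map_mul] using h
  exact h2

/-- The homomorphism `ι : W_{D(2)} → W_D ⊗ W_D` with `ι u = x ⊗ 1` and `ι v = x ⊗ x`. -/
def iota : WD2 →ₐ[ℝ] WD ⊗[ℝ] WD :=
  Ideal.Quotient.liftₐ ID2 (MvPolynomial.aeval ![xD ⊗ₜ[ℝ] 1, xD ⊗ₜ[ℝ] xD]) (by
    intro a ha
    have key : ID2 ≤
        RingHom.ker (MvPolynomial.aeval
          ![xD ⊗ₜ[ℝ] 1, xD ⊗ₜ[ℝ] xD] : MvPolynomial (Fin 2) ℝ →ₐ[ℝ] WD ⊗[ℝ] WD) := by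
      rw [ID2, Ideal.span_le]
      rintro p hp
      simp only [Set.mem_insert_iff, Set.mem_singleton_iff] at hp
      simp only [SetLike.mem_coe, RingHom.mem_ker]
      rcases hp with rfl | rfl | rfl <;>
        simp [map_mul, Algebra.TensorProduct.tmul_mul_tmul, xD_sq,
          Matrix.cons_val_zero, Matrix.cons_val_one] <;>
        exact (@Algebra.TensorProduct.tmul_mul_tmul ℝ WD WD _ _ Algebra.toModule _ _ _
          Algebra.toModule _ _ _ _ _ _).trans
          (by rw [xD_sq]; exact (TensorProduct.mk ℝ WD WD).map_zero₂ _)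
    exact key ha)

def ell1 : WD →ₗ[ℝ] ℝ where
  toFun z := Quotient.liftOn' z (fun p => p.coeff 1) (fun p q h => by
    rw [Submodule.quotientRel_def] at h
    rw [Ideal.mem_span_singleton] at h
    obtain ⟨r, hr⟩ := h
    have : (p - q).coeff 1 = 0 := by
      rw [hr, mul_comm, Polynomial.coeff_mul_X_pow']
      norm_num
    rw [Polynomial.coeff_sub, sub_eq_zero] at this
    exact this)
  map_add' z w := by
    obtain ⟨p, rfl⟩ := Ideal.Quotient.mk_surjective z
    obtain ⟨q, rfl⟩ := Ideal.Quotient.mk_surjective w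
    show ((p + q).coeff 1) = p.coeff 1 + q.coeff 1
    simp
  map_smul' r z := by
    obtain ⟨p, rfl⟩ := Ideal.Quotient.mk_surjective z
    have h1 : r • (Ideal.Quotient.mk (Ideal.span {(X : Polynomial ℝ) ^ 2}) p)
        = Ideal.Quotient.mk _ (r • p) := (map_smul (Ideal.Quotient.mkₐ ℝ _) r p).symm
    erw [h1]
    show ((r • p).coeff 1) = r * p.coeff 1
    simp

lemma ell1_mk (p : Polynomial ℝ) : ell1 (Ideal.Quotient.mk _ p) = p.coeff 1 := rfl

lemma ell1_xD : ell1 xD = 1 := by simp [xD, ell1_mk]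

lemma ell1_one : ell1 (1 : WD) = 0 := by
  have : (1 : WD) = Ideal.Quotient.mk _ (1 : Polynomial ℝ) := rfl
  rw [this, ell1_mk]; simp [Polynomial.coeff_one]

lemma eps_mk (p : Polynomial ℝ) : εD (Ideal.Quotient.mk _ p) = p.coeff 0 := by
  have h : εD (Ideal.Quotient.mk _ p) = aeval (0:ℝ) p := rfl
  rw [h]
  simp [Polynomial.coeff_zero_eq_eval_zero]

lemma eps_xD : εD xD = 0 := by simp [xD, eps_mk]

lemma algebraMap_WD (r : ℝ) :
    algebraMap ℝ WD r = Ideal.Quotient.mk _ (C r) := rfl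

lemma wd_decomp (z : WD) : z = algebraMap ℝ WD (εD z) + ell1 z • xD := by
  obtain ⟨p, rfl⟩ := Ideal.Quotient.mk_surjective z
  rw [eps_mk, ell1_mk, algebraMap_WD]
  have hsm : (p.coeff 1) • xD = Ideal.Quotient.mk (Ideal.span {(X : Polynomial ℝ) ^ 2})
      (C (p.coeff 1) * X) := by
    rw [← Polynomial.smul_eq_C_mul, xD]
    exact (map_smul (Ideal.Quotient.mkₐ ℝ _) _ _).symm
  rw [hsm]
  erw [show (Ideal.Quotient.mk (Ideal.span {(X : Polynomial ℝ) ^ 2}) (C (p.coeff 0)) +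
        Ideal.Quotient.mk (Ideal.span {(X : Polynomial ℝ) ^ 2}) (C (p.coeff 1) * X) : WD)
      = Ideal.Quotient.mk _ (C (p.coeff 0) + C (p.coeff 1) * X) from (map_add _ _ _).symm,
    Ideal.Quotient.eq]
  rw [Ideal.mem_span_singleton, Polynomial.X_pow_dvd_iff]
  intro d hd
  interval_cases d <;> simp

def fij (g h : WD →ₗ[ℝ] ℝ) : (WD ⊗[ℝ] WD) →ₗ[ℝ] ℝ :=
  (TensorProduct.lid ℝ ℝ).toLinearMap ∘ₗ TensorProduct.map g h

lemma fij_tmul (g h : WD →ₗ[ℝ] ℝ) (a b : WD) :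
    fij g h (a ⊗ₜ[ℝ] b) = g a * h b := by
  simp [fij, smul_eq_mul]

def ell0 : WD →ₗ[ℝ] ℝ := εD.toLinearMap

def decompMap : (WD ⊗[ℝ] WD) →ₗ[ℝ] (WD ⊗[ℝ] WD) :=
  (fij ell0 ell0).smulRight ((1 : WD) ⊗ₜ[ℝ] (1 : WD)) +
  (fij ell1 ell0).smulRight (xD ⊗ₜ[ℝ] (1 : WD)) +
  (fij ell0 ell1).smulRight ((1 : WD) ⊗ₜ[ℝ] xD) +
  (fij ell1 ell1).smulRight (xD ⊗ₜ[ℝ] xD)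

lemma tensor_decomp (z : WD ⊗[ℝ] WD) : decompMap z = z := by
  induction z using TensorProduct.induction_on with
  | zero => simp
  | tmul a b =>
    simp only [decompMap, LinearMap.add_apply, LinearMap.smulRight_apply, fij_tmul]
    conv_rhs => rw [wd_decomp a, wd_decomp b]
    simp only [ell0, AlgHom.toLinearMap_apply, Algebra.algebraMap_eq_smul_one]
    simp only [TensorProduct.add_tmul, TensorProduct.tmul_add, TensorProduct.smul_tmul,
      TensorProduct.tmul_smul, smul_smul]
    module
  | add z w hz hw => simp [map_add, hz, hw]

def u2 : WD2 := Ideal.Quotient.mk ID2 (MvPolynomial.X 0)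
def v2 : WD2 := Ideal.Quotient.mk ID2 (MvPolynomial.X 1)

def mkX (i : Fin 2) : WD2 := Ideal.Quotient.mk ID2 (MvPolynomial.X i)

def mkP (p : MvPolynomial (Fin 2) ℝ) : WD2 := Ideal.Quotient.mk ID2 p

lemma mul_X_zero (i j : Fin 2) : mkX i * mkX j = 0 := by
  show (Ideal.Quotient.mk ID2 (MvPolynomial.X i * MvPolynomial.X j) : WD2) = 0
  rw [Ideal.Quotient.eq_zero_iff_mem, ID2]
  apply Ideal.subset_span
  fin_cases i <;> fin_cases j <;>
    simp only [Set.mem_insert_iff, Set.mem_singleton_iff] <;>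
    first
      | exact Or.inl rfl
      | exact Or.inr (Or.inl rfl)
      | exact Or.inr (Or.inr rfl)
      | exact Or.inr (Or.inl (mul_comm _ _))

lemma algebraMap_WD2 (r : ℝ) :
    algebraMap ℝ WD2 r = Ideal.Quotient.mk ID2 (MvPolynomial.C r) := rfl

lemma wd2_decomp (w : WD2) :
    ∃ a b c : ℝ, w = algebraMap ℝ WD2 a + b • u2 + c • v2 := by
  obtain ⟨p, rfl⟩ := Ideal.Quotient.mk_surjective w
  induction p using MvPolynomial.induction_on with
  | C a => exact ⟨a, 0, 0, by simp [algebraMap_WD2]; exact (add_zero _).symm⟩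
  | add p q hp hq =>
    obtain ⟨a, b, c, h1⟩ := hp
    obtain ⟨a', b', c', h2⟩ := hq
    refine ⟨a + a', b + b', c + c', ?_⟩
    rw [map_add, h1, h2, map_add, add_smul, add_smul]
    abel
  | mul_X p i hp =>
    obtain ⟨a, b, c, h1⟩ := hp
    have key : (Ideal.Quotient.mk ID2 (p * MvPolynomial.X i) : WD2) = a • mkX i := by
      have hm : (Ideal.Quotient.mk ID2 (p * MvPolynomial.X i) : WD2)
          = mkP p * mkX i := map_mul (Ideal.Quotient.mk ID2) p (MvPolynomial.X i)
      have h1' : mkP p = algebraMap ℝ WD2 a + b • u2 + c • v2 := h1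
      rw [hm, h1', add_mul, add_mul, smul_mul_assoc, smul_mul_assoc,
        show u2 * mkX i = 0 from mul_X_zero 0 i,
        show v2 * mkX i = 0 from mul_X_zero 1 i,
        smul_zero, smul_zero, add_zero, add_zero, ← Algebra.smul_def]
    fin_cases i
    · refine ⟨0, a, 0, ?_⟩
      rw [key, map_zero, zero_smul, zero_add, add_zero]
      rfl
    · refine ⟨0, 0, a, ?_⟩
      rw [key, map_zero, zero_smul, zero_add, zero_add]
      rfl

lemma iota_u2 : iota u2 = xD ⊗ₜ[ℝ] (1 : WD) := by
  have h : iota u2 = MvPolynomial.aeval ![xD ⊗ₜ[ℝ] (1:WD), xD ⊗ₜ[ℝ] xD] (MvPolynomial.X 0) := rfl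
  rw [h]; simp

lemma iota_v2 : iota v2 = xD ⊗ₜ[ℝ] xD := by
  have h : iota v2 = MvPolynomial.aeval ![xD ⊗ₜ[ℝ] (1:WD), xD ⊗ₜ[ℝ] xD] (MvPolynomial.X 1) := rfl
  rw [h]; simp

-- MAIN START
lemma iota_apply (a b c : ℝ) :
    iota (algebraMap ℝ WD2 a + b • u2 + c • v2)
      = a • ((1:WD) ⊗ₜ[ℝ] (1:WD)) + b • (xD ⊗ₜ[ℝ] (1:WD)) + c • (xD ⊗ₜ[ℝ] xD) := by
  rw [map_add, map_add, map_smul, map_smul, iota_u2, iota_v2, AlgHom.commutes,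
    Algebra.algebraMap_eq_smul_one]
  rfl

/-- `W_{D(2)} → W_D ⊗ W_D ⇉ W_D` is an equalizer diagram: `ι` is injective with range
the equalizer subalgebra of `p₁` and `p₀`. -/
theorem iota_injective_and_range_eq_equalizer :
    Function.Injective iota ∧ iota.range = AlgHom.equalizer (p1 εD) (p0 εD εD) := by
  have hval : ∀ a b c : ℝ,
      (fij ell0 ell0 (a • ((1:WD) ⊗ₜ[ℝ] (1:WD)) + b • (xD ⊗ₜ[ℝ] (1:WD)) + c • (xD ⊗ₜ[ℝ] xD)) = a)
      ∧ (fij ell1 ell0 (a • ((1:WD) ⊗ₜ[ℝ] (1:WD)) + b • (xD ⊗ₜ[ℝ] (1:WD)) + c • (xD ⊗ₜ[ℝ] xD)) = b)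
      ∧ (fij ell1 ell1 (a • ((1:WD) ⊗ₜ[ℝ] (1:WD)) + b • (xD ⊗ₜ[ℝ] (1:WD)) + c • (xD ⊗ₜ[ℝ] xD)) = c) := by
    intro a b c
    refine ⟨?_, ?_, ?_⟩ <;>
      simp [map_add, map_smul, fij_tmul, ell0, eps_xD, ell1_xD, ell1_one, smul_eq_mul]
  constructor
  · rw [injective_iff_map_eq_zero]
    intro w hw
    obtain ⟨a, b, c, rfl⟩ := wd2_decomp w
    rw [iota_apply] at hw
    have ha : a = 0 := by have := (hval a b c).1; rw [hw] at this; simpa using this.symm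
    have hb : b = 0 := by have := (hval a b c).2.1; rw [hw] at this; simpa using this.symm
    have hc : c = 0 := by have := (hval a b c).2.2; rw [hw] at this; simpa using this.symm
    simp [ha, hb, hc]
  · ext z
    simp only [AlgHom.mem_range, AlgHom.mem_equalizer]
    constructor
    · rintro ⟨w, rfl⟩
      obtain ⟨a, b, c, rfl⟩ := wd2_decomp w
      rw [iota_apply]
      simp only [map_add, map_smul]
      rw [p1, p0]
      simp only [Algebra.TensorProduct.productMap_apply_tmul, AlgHom.comp_apply,
        AlgHom.id_apply, Algebra.ofId_apply, eps_xD, map_zero, map_one]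
      simp [eps_xD]
    · intro hz
      -- z in equalizer: show coefficient of 1 ⊗ x vanishes
      have hdec := tensor_decomp z
      set a := fij ell0 ell0 z with ha
      set b := fij ell1 ell0 z with hb
      set c := fij ell0 ell1 z with hc
      set d := fij ell1 ell1 z with hd
      have hzdec : z = a • ((1:WD) ⊗ₜ[ℝ] (1:WD)) + b • (xD ⊗ₜ[ℝ] (1:WD))
          + c • ((1:WD) ⊗ₜ[ℝ] xD) + d • (xD ⊗ₜ[ℝ] xD) := by
        rw [← hdec]; rfl
      have hp1 : p1 εD z = a • (1:WD) + c • xD := by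
        rw [hzdec, p1]
        simp only [map_add, map_smul, Algebra.TensorProduct.productMap_apply_tmul,
          AlgHom.comp_apply, AlgHom.id_apply, Algebra.ofId_apply, eps_xD, map_zero, map_one]
        simp [eps_xD]
      have hp0 : p0 εD εD z = a • (1:WD) := by
        rw [hzdec, p0]
        simp only [map_add, map_smul, Algebra.TensorProduct.productMap_apply_tmul,
          AlgHom.comp_apply, Algebra.ofId_apply, eps_xD, map_zero, map_one]
        simp [eps_xD]
      have hc0 : c = 0 := by
        have h := hz
        rw [hp1, hp0] at h
        have : c • xD = 0 := by
          have := sub_eq_zero.mpr h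
          simpa [add_sub_cancel_left] using this
        have h2 := congrArg ell1 this
        simpa [map_smul, ell1_xD, ell1_one, smul_eq_mul] using h2
      refine ⟨algebraMap ℝ WD2 a + b • u2 + d • v2, ?_⟩
      rw [iota_apply, hzdec, hc0]
      simp
-- MAIN END


end
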